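/- Let m ≥ 1 be an integer and let G be a nonempty graph in which every nonempty vertex set X with |X| ≤ m satisfies |N_G(X)| > 2|X|. Let P be a path of maximum length in G and let S be the set of all ending vertices for P. Then |S| ≥ m. -/

import Mathlib

open SimpleGraph

/-- `Q` is a rotation of `P`: if `P = p₀ … x … p_t` (with endpoint `b = p_t`) and `x b` is an
edge, the rotation is `p₀ … x b p_{t-1} … `, obtained by reversing the segment after `x` and
appending it after the new edge `x b`.  This is captured by the relation between the vertex
sequences (supports) of the two walks. -/
def IsRotation {V : Type*} {G : SimpleGraph V} {a b c : V}
    (P : G.Walk a b) (Q : G.Walk a c) : Prop :=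
  ∃ (l1 l2 : List V) (x : V),
    P.support = l1 ++ x :: (l2 ++ [b]) ∧ Q.support = l1 ++ x :: b :: l2.reverse

/-- `Q` is derived from `P`: obtained from `P` by a finite sequence of rotations. -/
def IsDerived {V : Type*} {G : SimpleGraph V} {a b c : V}
    (P : G.Walk a b) (Q : G.Walk a c) : Prop :=
  Relation.ReflTransGen (fun R S : (Σ v : V, G.Walk a v) => IsRotation R.2 S.2) ⟨b, P⟩ ⟨c, Q⟩

/-- `x` is an ending vertex for `P`: some path derived from `P` ends at `x`. -/
def IsEndingVertex {V : Type*} {G : SimpleGraph V} {a b : V}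
    (P : G.Walk a b) (x : V) : Prop :=
  ∃ Q : G.Walk a x, IsDerived P Q

/-- `X` is a connected set of ending vertices for `P`: for every `x ∈ X` there is a walk
ending at `x` derived from `P` by a sequence of rotations all of whose intermediate
walks end at vertices of `X`. -/
def IsConnectedEndingSet {V : Type*} {G : SimpleGraph V} {a b : V}
    (P : G.Walk a b) (X : Set V) : Prop :=
  ∀ x ∈ X, ∃ Q : G.Walk a x,
    Relation.ReflTransGen
      (fun R S : (Σ v : V, G.Walk a v) => IsRotation R.2 S.2 ∧ S.1 ∈ X) ⟨b, P⟩ ⟨x, Q⟩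

/-- `N_G(S)`: the set of vertices outside `S` having a neighbour in `S`. -/
def setNbhd {V : Type*} (G : SimpleGraph V) (S : Set V) : Set V :=
  {v | v ∉ S ∧ ∃ s ∈ S, G.Adj v s}

namespace PosaAux


variable {V : Type*}

/-- The list of edges determined by a list of vertices. -/
def edgesOf : List V → List (Sym2 V)
  | [] => []
  | [_] => []
  | a :: b :: t => s(a, b) :: edgesOf (b :: t)

@[simp] lemma edgesOf_nil : edgesOf ([] : List V) = [] := rfl
@[simp] lemma edgesOf_single (a : V) : edgesOf [a] = [] := rfl
@[simp] lemma edgesOf_cons_cons (a b : V) (t : List V) :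
    edgesOf (a :: b :: t) = s(a, b) :: edgesOf (b :: t) := rfl

lemma mem_of_mem_edgesOf : ∀ {l : List V} {e : Sym2 V}, e ∈ edgesOf l → ∀ w ∈ e, w ∈ l
  | [], e, he => by simp at he
  | [a], e, he => by simp at he
  | a :: b :: t, e, he => by
    intro w hw
    rw [edgesOf_cons_cons] at he
    rcases List.mem_cons.mp he with rfl | he'
    · rcases Sym2.mem_iff.mp hw with rfl | rfl <;> simp
    · exact List.mem_cons_of_mem _ (mem_of_mem_edgesOf he' w hw)

lemma edgesOf_append_cons : ∀ (l : List V) (x : V) (r : List V),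
    edgesOf (l ++ x :: r) = edgesOf (l ++ [x]) ++ edgesOf (x :: r)
  | [], x, r => by simp
  | [a], x, r => by simp
  | a :: b :: t, x, r => by
    have ih := edgesOf_append_cons (b :: t) x r
    simp only [List.cons_append, edgesOf_cons_cons] at *
    rw [ih]

lemma edgesOf_concat : ∀ (l : List V) (a z : V), l.getLast? = some z →
    edgesOf (l ++ [a]) = edgesOf l ++ [s(z, a)]
  | [], a, z, hz => by simp at hz
  | [x], a, z, hz => by
    simp only [List.getLast?_singleton, Option.some_inj] at hz
    subst hz; simp
  | x :: y :: t, a, z, hz => by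
    rw [List.getLast?_cons_cons] at hz
    have ih := edgesOf_concat (y :: t) a z hz
    simp only [List.cons_append, edgesOf_cons_cons] at *
    rw [ih]

lemma edgesOf_reverse : ∀ (l : List V), edgesOf l.reverse = (edgesOf l).reverse
  | [] => rfl
  | [a] => rfl
  | a :: b :: t => by
    have ih := edgesOf_reverse (b :: t)
    have hne : (b :: t).reverse ≠ [] := by simp
    rw [show (a :: b :: t).reverse = (b :: t).reverse ++ [a] by simp]
    rw [edgesOf_concat _ a b (by rw [List.getLast?_reverse]; rfl), ih,
      edgesOf_cons_cons, List.reverse_cons]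
    simp [Sym2.eq_swap]

lemma head_edge (b : V) : ∀ (t : List V), b ∉ t → ∀ {e : Sym2 V},
    e ∈ edgesOf (b :: t) → b ∈ e → ∃ t0 t', t = t0 :: t' ∧ e = s(b, t0)
  | [], _, e, he, _ => by simp at he
  | t0 :: t', hb, e, he, hbe => by
    rw [edgesOf_cons_cons] at he
    rcases List.mem_cons.mp he with rfl | he'
    · exact ⟨t0, t', rfl, rfl⟩
    · exact absurd (mem_of_mem_edgesOf he' b hbe) hb

lemma two_sided : ∀ (l : List V), l.Nodup → ∀ v : V, ∃ p n : V,
    ∀ e ∈ edgesOf l, v ∈ e → e = s(p, v) ∨ e = s(v, n)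
  | [], _, v => ⟨v, v, by simp⟩
  | [a], _, v => ⟨v, v, by simp⟩
  | a :: b :: t, h, v => by
    have hnd : (b :: t).Nodup := h.of_cons
    obtain ⟨p', n', ih⟩ := two_sided (b :: t) hnd v
    rcases eq_or_ne v a with rfl | hva
    · refine ⟨v, b, ?_⟩
      intro e he hve
      rw [edgesOf_cons_cons] at he
      rcases List.mem_cons.mp he with rfl | he'
      · exact Or.inr rfl
      · exact absurd (mem_of_mem_edgesOf he' v hve) (List.nodup_cons.mp h).1
    · rcases eq_or_ne v b with rfl | hvb
      · cases t with
        | nil =>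
          refine ⟨a, v, ?_⟩
          intro e he hve
          rw [edgesOf_cons_cons] at he
          rcases List.mem_cons.mp he with rfl | he'
          · exact Or.inl rfl
          · simp at he'
        | cons t0 t' =>
          refine ⟨a, t0, ?_⟩
          intro e he hve
          rw [edgesOf_cons_cons] at he
          rcases List.mem_cons.mp he with rfl | he'
          · exact Or.inl rfl
          · have hbt : v ∉ t0 :: t' := (List.nodup_cons.mp hnd).1
            obtain ⟨s0, s', hs, rfl⟩ := head_edge v _ hbt he' hve
            injection hs with h1 _
            subst h1
            exact Or.inr rfl
      · refine ⟨p', n', ?_⟩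
        intro e he hve
        rw [edgesOf_cons_cons] at he
        rcases List.mem_cons.mp he with rfl | he'
        · rcases Sym2.mem_iff.mp hve with h | h
          · exact absurd h hva
          · exact absurd h hvb
        · exact ih e he' hve

lemma walk_edges_eq {G : SimpleGraph V} : ∀ {u v : V} (p : G.Walk u v),
    p.edges = edgesOf p.support
  | _, _, Walk.nil => rfl
  | _, _, Walk.cons h q => by
    rw [Walk.edges_cons, Walk.support_cons, walk_edges_eq q]
    conv_rhs => rw [q.support_eq_cons]
    rw [edgesOf_cons_cons, ← q.support_eq_cons]

lemma walk_support_getLast? {G : SimpleGraph V} {u v : V} (p : G.Walk u v) :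
    p.support.getLast? = some v := by
  rw [← List.head?_reverse, ← Walk.support_reverse, p.reverse.support_eq_cons]
  simp

lemma walk_getLast {G : SimpleGraph V} {u v : V} (p : G.Walk u v) :
    p.support.getLast p.support_ne_nil = v := by
  have h := walk_support_getLast? p
  rw [List.getLast?_eq_getLast p.support_ne_nil] at h
  exact Option.some_injective _ h

lemma walk_support_eq_concat {G : SimpleGraph V} {u v : V} (p : G.Walk u v) :
    p.support = p.support.dropLast ++ [v] := by
  have h := (List.dropLast_append_getLast p.support_ne_nil).symm
  rwa [walk_getLast p] at h

lemma end_of_support_eq {G : SimpleGraph V} {u v a : V} {l : List V} (p : G.Walk u v)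
    (h : p.support = l ++ [a]) : a = v := by
  have h1 := walk_support_getLast? p
  rw [h, List.getLast?_concat] at h1
  exact Option.some_injective _ h1

lemma concat_isPath {G : SimpleGraph V} {u v w : V} {p : G.Walk u v} (h : G.Adj v w)
    (hp : p.IsPath) (hw : w ∉ p.support) : (p.concat h).IsPath := by
  rw [Walk.isPath_def, Walk.support_concat, List.nodup_append']
  refine ⟨hp.support_nodup, List.nodup_singleton _, ?_⟩
  intro a ha hb
  simp only [List.mem_singleton] at hb
  subst hb; exact hw ha


lemma exists_rotation {G : SimpleGraph V} [DecidableEq V] {p₀ x : V} (Q : G.Walk p₀ x)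
    {v : V} (hv : v ∈ Q.support) (hvx : v ≠ x) (hadj : G.Adj v x) :
    ∃ (c : V) (Q' : G.Walk p₀ c), IsRotation Q Q' ∧ s(v, c) ∈ Q.edges := by
  have hspec := Q.take_spec hv
  obtain ⟨c, hadj', R, hQ2⟩ := Walk.exists_eq_cons_of_ne hvx (Q.dropUntil v hv)
  obtain ⟨l1, hl1⟩ : ∃ l1, (Q.takeUntil v hv).support = l1 ++ [v] :=
    ⟨_, walk_support_eq_concat _⟩
  obtain ⟨l2, hl2⟩ : ∃ l2, R.support = l2 ++ [x] := ⟨_, walk_support_eq_concat _⟩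
  refine ⟨c, (Q.takeUntil v hv).append (Walk.cons hadj R.reverse), ⟨l1, l2, v, ?_, ?_⟩, ?_⟩
  · conv_lhs => rw [← hspec]
    rw [Walk.support_append, hQ2, Walk.support_cons, List.tail_cons, hl1, hl2]
    simp
  · rw [Walk.support_append, Walk.support_cons, List.tail_cons, Walk.support_reverse,
      hl1, hl2]
    simp
  · rw [← hspec, Walk.edges_append, hQ2, Walk.edges_cons]
    simp

end PosaAux


/-- If in a (nonempty) graph `G` every nonempty vertex set `X` with `|X| ≤ m` satisfies
`|N_G(X)| > 2|X|`, and `P` is a path of maximum length in `G`, then the set `S` of all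
ending vertices for `P` has `|S| ≥ m`. -/
theorem stmt15 {V : Type*} [Fintype V] [Nonempty V] (m : ℕ) (hm : 1 ≤ m)
    {G : SimpleGraph V}
    (hexp : ∀ X : Set V, X.Nonempty → X.ncard ≤ m → 2 * X.ncard < (setNbhd G X).ncard)
    {p₀ b : V} (P : G.Walk p₀ b) (hP : P.IsPath)
    (hmax : ∀ (u v : V) (Q : G.Walk u v), Q.IsPath → Q.length ≤ P.length) :
    m ≤ {x : V | IsEndingVertex P x}.ncard := by
  classical
  set S := {x : V | IsEndingVertex P x} with hSdef
  have hbS : b ∈ S := ⟨P, Relation.ReflTransGen.refl⟩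
  have inv : ∀ pr : (Σ v : V, G.Walk p₀ v),
      Relation.ReflTransGen (fun R S : (Σ v : V, G.Walk p₀ v) => IsRotation R.2 S.2)
        ⟨b, P⟩ pr →
      pr.2.support.Perm P.support ∧ pr.2.IsPath ∧
        (∀ e ∈ P.edges, e ∈ pr.2.edges ∨ ∃ w ∈ e, IsEndingVertex P w) := by
    intro pr h
    induction h with
    | refl => exact ⟨List.Perm.refl _, hP, fun e he => Or.inl he⟩
    | @tail mid fin hsteps hstep ih =>
      obtain ⟨permQ, pathQ, edgesQ⟩ := ih
      have hder : IsDerived P fin.2 := hsteps.tail hstep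
      obtain ⟨l1, l2, y, hQ, hQ'⟩ := hstep
      have hp1 : List.Perm (mid.1 :: l2.reverse) (l2 ++ [mid.1]) :=
        (List.Perm.cons mid.1 (List.reverse_perm l2)).trans
          (List.perm_append_singleton _ _).symm
      have hperm' : fin.2.support.Perm mid.2.support := by
        rw [hQ, hQ']
        exact List.Perm.append_left l1 (List.Perm.cons y hp1)
      have hperm : fin.2.support.Perm P.support := hperm'.trans permQ
      have hpath : fin.2.IsPath := by
        rw [Walk.isPath_def]; exact hperm.nodup_iff.mpr hP.support_nodup
      refine ⟨hperm, hpath, ?_⟩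
      intro e he
      rcases edgesQ e he with heQ | hw
      · cases l2 with
        | nil =>
          left
          rw [PosaAux.walk_edges_eq fin.2, hQ']
          rw [PosaAux.walk_edges_eq mid.2, hQ] at heQ
          simpa using heQ
        | cons z t =>
          have hfin1 : fin.1 = z := by
            have h := PosaAux.walk_support_getLast? fin.2
            rw [hQ', show l1 ++ y :: mid.1 :: (z :: t).reverse
              = (l1 ++ y :: mid.1 :: t.reverse) ++ [z] by simp,
              List.getLast?_concat] at h
            exact (Option.some_injective _ h).symm
          rw [PosaAux.walk_edges_eq mid.2, hQ] at heQ
          rw [PosaAux.walk_edges_eq fin.2, hQ']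
          rw [PosaAux.edgesOf_append_cons] at heQ ⊢
          rcases List.mem_append.mp heQ with h1 | h1
          · exact Or.inl (List.mem_append_left _ h1)
          · rw [show (z :: t) ++ [mid.1] = z :: (t ++ [mid.1]) from rfl,
              PosaAux.edgesOf_cons_cons] at h1
            rcases List.mem_cons.mp h1 with rfl | h2
            · exact Or.inr ⟨z, Sym2.mem_mk_right y z, by rw [← hfin1]; exact ⟨fin.2, hder⟩⟩
            · left
              apply List.mem_append_right
              rw [PosaAux.edgesOf_cons_cons]
              apply List.mem_cons_of_mem
              rw [show mid.1 :: (z :: t).reverse = ((z :: t) ++ [mid.1]).reverse by simp,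
                PosaAux.edgesOf_reverse, List.mem_reverse]
              exact h2
      · exact Or.inr hw
  have hfinS : S.Finite := Set.toFinite _
  have claimC : ∀ v ∈ setNbhd G S, ∃ s ∈ S, s(v, s) ∈ P.edges := by
    intro v hv
    obtain ⟨hvS, x, hxS, hadj⟩ := hv
    by_contra hno
    push_neg at hno
    have hvx : v ≠ x := fun h => hvS (h ▸ hxS)
    obtain ⟨Q, hQder⟩ := hxS
    obtain ⟨hperm, hQpath, hQinv⟩ := inv ⟨x, Q⟩ hQder
    dsimp only at hperm hQpath hQinv
    have hlen : Q.length = P.length := by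
      have h := hperm.length_eq
      rw [Walk.length_support, Walk.length_support] at h
      omega
    have hvsup : v ∈ Q.support := by
      by_contra hns
      have h := hmax p₀ v (Q.concat hadj.symm) (PosaAux.concat_isPath hadj.symm hQpath hns)
      rw [Walk.length_concat] at h
      omega
    obtain ⟨c, Q', hrot, hedge⟩ := PosaAux.exists_rotation Q hvsup hvx hadj
    have hcS : c ∈ S := ⟨Q', Relation.ReflTransGen.tail hQder hrot⟩
    have hPQ : ∀ e ∈ P.edges, v ∈ e → e ∈ Q.edges := by
      intro e he hve
      rcases hQinv e he with h | ⟨w, hwe, hwS⟩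
      · exact h
      · exfalso
        have hvw : v ≠ w := fun h => hvS (h ▸ hwS)
        have hew : e = s(v, w) := (Sym2.mem_and_mem_iff hvw).mp ⟨hve, hwe⟩
        exact hno w hwS (hew ▸ he)
    have hnotP : s(v, c) ∉ P.edges := hno c hcS
    have hvb : v ≠ b := fun h => hvS (h ▸ hbS)
    have hvP : v ∈ P.support := hperm.mem_iff.mp hvsup
    obtain ⟨l1, l2, hsup⟩ := List.append_of_mem hvP
    cases l1 with
    | nil =>
      have hvp0 : v = p₀ := by
        have h : p₀ :: P.support.tail = v :: l2 := by
          rw [← P.support_eq_cons, hsup]; simp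
        injection h with h1 _
        exact h1.symm
      have hP1 : 1 ≤ P.length := by
        have hpath1 : (Walk.cons hadj Walk.nil).IsPath := by
          rw [Walk.isPath_def]; simp [hvx]
        have h := hmax _ _ _ hpath1
        simpa using h
      have hnn : ¬ P.Nil := by rw [Walk.nil_iff_length_eq]; omega
      obtain ⟨u, hadj1, P', hPeq⟩ := Walk.not_nil_iff.mp hnn
      have he1P : s(v, u) ∈ P.edges := by rw [hPeq, Walk.edges_cons, hvp0]; simp
      have he1Q := hPQ _ he1P (Sym2.mem_mk_left _ _)
      have hne : s(v, u) ≠ s(v, c) := fun h => hnotP (h ▸ he1P)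
      have hQsup : Q.support = v :: Q.support.tail := by
        rw [hvp0]; exact Q.support_eq_cons
      have hp0nt : v ∉ Q.support.tail := by
        have h := hQpath.support_nodup
        rw [hQsup] at h
        exact (List.nodup_cons.mp h).1
      rw [PosaAux.walk_edges_eq Q, hQsup] at he1Q hedge
      obtain ⟨t0, t', ht, he1⟩ := PosaAux.head_edge _ _ hp0nt he1Q (Sym2.mem_mk_left _ _)
      obtain ⟨s0, s', hs, he3⟩ := PosaAux.head_edge _ _ hp0nt hedge (Sym2.mem_mk_left _ _)
      rw [ht] at hs
      injection hs with hts _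
      exact hne (by rw [he1, he3, hts])
    | cons a1 l1' =>
      cases l2 with
      | nil => exact hvb (PosaAux.end_of_support_eq P hsup)
      | cons z t =>
        obtain ⟨av, hav⟩ : ∃ av, (a1 :: l1').getLast? = some av :=
          ⟨_, List.getLast?_eq_getLast (List.cons_ne_nil a1 l1')⟩
        have hav_mem : av ∈ a1 :: l1' := by
          rw [List.getLast?_eq_getLast (List.cons_ne_nil a1 l1'), Option.some_inj] at hav
          exact hav ▸ List.getLast_mem _
        have hnd := hP.support_nodup
        rw [hsup] at hnd
        obtain ⟨hnd1, hnd2, hdisj⟩ := List.nodup_append'.mp hnd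
        have hav_ne : av ∉ v :: z :: t := hdisj hav_mem
        have havv : av ≠ v := fun h => hav_ne (h ▸ List.mem_cons_self)
        have havz : av ≠ z :=
          fun h => hav_ne (h ▸ List.mem_cons_of_mem _ (List.mem_cons_self))
        have hePedges : P.edges = (PosaAux.edgesOf ((a1 :: l1') ++ [v]))
            ++ (s(v, z) :: PosaAux.edgesOf (z :: t)) := by
          rw [PosaAux.walk_edges_eq P, hsup, PosaAux.edgesOf_append_cons,
            PosaAux.edgesOf_cons_cons]
        have he1P : s(av, v) ∈ P.edges := by
          rw [hePedges]
          exact List.mem_append_left _ (by rw [PosaAux.edgesOf_concat _ _ _ hav]; simp)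
        have he2P : s(v, z) ∈ P.edges := by rw [hePedges]; simp
        have he1Q := hPQ _ he1P (Sym2.mem_mk_right _ _)
        have he2Q := hPQ _ he2P (Sym2.mem_mk_left _ _)
        have hne12 : s(av, v) ≠ s(v, z) := by
          intro h
          rcases Sym2.eq_iff.mp h with ⟨ha, _⟩ | ⟨ha, _⟩
          · exact havv ha
          · exact havz ha
        have hne13 : s(av, v) ≠ s(v, c) := fun h => hnotP (h ▸ he1P)
        have hne23 : s(v, z) ≠ s(v, c) := fun h => hnotP (h ▸ he2P)
        obtain ⟨pp, nn, hQ2s⟩ := PosaAux.two_sided Q.support hQpath.support_nodup v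
        rw [PosaAux.walk_edges_eq Q] at he1Q he2Q hedge
        have h1 := hQ2s _ he1Q (Sym2.mem_mk_right _ _)
        have h2 := hQ2s _ he2Q (Sym2.mem_mk_left _ _)
        have h3 := hQ2s _ hedge (Sym2.mem_mk_left _ _)
        rcases h1 with h1|h1 <;> rcases h2 with h2|h2 <;> rcases h3 with h3|h3
        · exact hne12 (h1.trans h2.symm)
        · exact hne12 (h1.trans h2.symm)
        · exact hne13 (h1.trans h3.symm)
        · exact hne23 (h2.trans h3.symm)
        · exact hne23 (h2.trans h3.symm)
        · exact hne13 (h1.trans h3.symm)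
        · exact hne12 (h1.trans h2.symm)
        · exact hne12 (h1.trans h2.symm)
  choose pf nf hpn using PosaAux.two_sided P.support hP.support_nodup
  have hsub : setNbhd G S ⊆ (pf '' S) ∪ (nf '' S) := by
    intro v hv
    have hvS : v ∉ S := hv.1
    obtain ⟨s, hsS, hse⟩ := claimC v hv
    rw [PosaAux.walk_edges_eq P] at hse
    rcases hpn s _ hse (Sym2.mem_mk_right _ _) with h | h
    · rcases Sym2.eq_iff.mp h with ⟨ha, _⟩ | ⟨ha, _⟩
      · exact Or.inl ⟨s, hsS, ha.symm⟩
      · exact absurd (show v ∈ S by rw [ha]; exact hsS) hvS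
    · rcases Sym2.eq_iff.mp h with ⟨ha, _⟩ | ⟨ha, _⟩
      · exact absurd (show v ∈ S by rw [ha]; exact hsS) hvS
      · exact Or.inr ⟨s, hsS, ha.symm⟩
  by_contra hlt
  push_neg at hlt
  have h1 := hexp S ⟨b, hbS⟩ (le_of_lt hlt)
  have h2 : (setNbhd G S).ncard ≤ 2 * S.ncard := by
    calc (setNbhd G S).ncard ≤ ((pf '' S) ∪ (nf '' S)).ncard :=
        Set.ncard_le_ncard hsub (Set.toFinite _)
      _ ≤ (pf '' S).ncard + (nf '' S).ncard := Set.ncard_union_le _ _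
      _ ≤ S.ncard + S.ncard := add_le_add (Set.ncard_image_le hfinS) (Set.ncard_image_le hfinS)
      _ = 2 * S.ncard := by ring
  omega
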